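/- Let b be a fixed-point-free homeomorphism of ℂ that commutes with the translation τ(z) = z + 1. Then for every path γ : [0,1] → ℂ with γ(1) = γ(0) + 1, the angular variation of b along γ is an integer, and this integer is the same for all such paths γ (it is denoted I(b, τ)). -/

import Mathlib

open Set Complex Real



/-- A continuous integer-valued function on an interval is constant. -/
lemma intConst (f : ℝ → ℝ) (a b : ℝ) (hab : a ≤ b) (hf : ContinuousOn f (Icc a b))
    (hint : ∀ t ∈ Icc a b, ∃ k : ℤ, f t = k) : f b = f a := by
  obtain ⟨ka, hka⟩ := hint a ⟨le_refl a, hab⟩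
  obtain ⟨kb, hkb⟩ := hint b ⟨hab, le_refl b⟩
  by_contra hne
  rcases lt_or_gt_of_ne hne with hlt | hlt
  · have h1 : f b + 1/2 ∈ Icc (f b) (f a) := by
      constructor
      · linarith
      · have : kb < ka := by exact_mod_cast hkb ▸ hka ▸ hlt
        have : (kb : ℝ) + 1 ≤ ka := by exact_mod_cast this
        rw [hka, hkb]; linarith
    obtain ⟨t, ht, hft⟩ := intermediate_value_Icc' hab hf h1
    obtain ⟨k, hk⟩ := hint t ht
    rw [hk, hkb] at hft
    have : (2*k : ℤ) = 2*kb + 1 := by exact_mod_cast (by linarith : (2*k : ℝ) = 2*kb + 1)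
    omega
  · have h1 : f a + 1/2 ∈ Icc (f a) (f b) := by
      constructor
      · linarith
      · have : ka < kb := by exact_mod_cast hka ▸ hkb ▸ hlt
        have : (ka : ℝ) + 1 ≤ kb := by exact_mod_cast this
        rw [hka, hkb]; linarith
    obtain ⟨t, ht, hft⟩ := intermediate_value_Icc hab hf h1
    obtain ⟨k, hk⟩ := hint t ht
    rw [hk, hka] at hft
    have : (2*k : ℤ) = 2*ka + 1 := by exact_mod_cast (by linarith : (2*k : ℝ) = 2*ka + 1)
    omega

lemma slit_of (z w : ℂ) (hz : z ≠ 0) (hw : w ≠ 0)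
    (h : dist (z / (‖z‖ : ℂ)) (w / (‖w‖ : ℂ)) < 1) : z / w ∈ Complex.slitPlane := by
  have hzr : (0:ℝ) < ‖z‖ := norm_pos_iff.mpr hz
  have hwr : (0:ℝ) < ‖w‖ := norm_pos_iff.mpr hw
  have hzn : (‖z‖ : ℂ) ≠ 0 := by exact_mod_cast hzr.ne'
  have hwn : (‖w‖ : ℂ) ≠ 0 := by exact_mod_cast hwr.ne'
  set v : ℂ := (z / (‖z‖ : ℂ)) / (w / (‖w‖ : ℂ)) with hv
  have hvu : ‖v - 1‖ < 1 := by
    have hwunit : ‖w / (‖w‖ : ℂ)‖ = 1 := by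
      rw [norm_div, Complex.norm_real, Real.norm_eq_abs, abs_of_pos hwr,
        div_self hwr.ne']
    have hwne : w / (‖w‖ : ℂ) ≠ 0 := div_ne_zero hw hwn
    have heq : v - 1 = (z / (‖z‖ : ℂ) - w / (‖w‖ : ℂ)) * (w / (‖w‖ : ℂ))⁻¹ := by
      rw [sub_mul, inv_eq_one_div, ← div_eq_mul_one_div, ← div_eq_mul_one_div,
        div_self hwne, hv, div_eq_mul_inv, div_eq_mul_inv]
    rw [heq, norm_mul, norm_inv, hwunit, inv_one, mul_one]
    rwa [dist_eq_norm] at h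
  have hre : 0 < v.re := by
    have h1 : |v.re - 1| ≤ ‖v - 1‖ := by
      have := Complex.abs_re_le_norm (v - 1)
      simpa using this
    have h2 := abs_lt.mp (lt_of_le_of_lt h1 hvu)
    linarith [h2.1]
  have hzw : z / w = ((‖z‖ / ‖w‖ : ℝ) : ℂ) * v := by
    rw [hv]; push_cast
    rw [div_div_div_comm, mul_div_cancel₀ _ (div_ne_zero hzn hwn)]
  rw [hzw]
  left
  have : (((‖z‖ / ‖w‖ : ℝ) : ℂ) * v).re = (‖z‖ / ‖w‖) * v.re := by
    simp [Complex.ofReal_re, Complex.mul_re, Complex.ofReal_im]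
  rw [this]
  positivity

lemma prodTel (f : ℕ → ℂ) (n : ℕ) (hf : ∀ k, k ≤ n → f k ≠ 0) :
    ∏ k ∈ Finset.range n, (f (k+1) / f k) = f n / f 0 := by
  induction n with
  | zero => simp [div_self (hf 0 le_rfl)]
  | succ n ih =>
    rw [Finset.prod_range_succ, ih (fun k hk => hf k (hk.trans (Nat.le_succ n)))]
    have h0 : f 0 ≠ 0 := hf 0 (Nat.zero_le _)
    have hn : f n ≠ 0 := hf n (Nat.le_succ n)
    field_simp



lemma liftIncrement (v : ℝ → ℂ) (θ : ℝ → ℝ) (a c : ℝ) (hac : a ≤ c)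
    (hv : ContinuousOn v (Icc a c))
    (hvne : ∀ t ∈ Icc a c, v t ≠ 0)
    (hslit : ∀ t ∈ Icc a c, v t / v a ∈ Complex.slitPlane)
    (hθ : ContinuousOn θ (Icc a c))
    (hlift : ∀ t ∈ Icc a c, v t = (‖v t‖ : ℂ) * Complex.exp (2 * π * Complex.I * (θ t : ℂ))) :
    θ c - θ a = Complex.arg (v c / v a) / (2 * π) := by
  have hπ : (π : ℝ) ≠ 0 := Real.pi_ne_zero
  have hamem : a ∈ Icc a c := ⟨le_refl a, hac⟩
  have hva : v a ≠ 0 := hvne a hamem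
  -- the normalized exponential identity
  have hunit : ∀ t ∈ Icc a c, Complex.exp (2 * π * Complex.I * (θ t : ℂ)) = v t / (‖v t‖ : ℂ) := by
    intro t ht
    have hne : (‖v t‖ : ℂ) ≠ 0 := by
      exact_mod_cast norm_ne_zero_iff.mpr (hvne t ht)
    rw [eq_div_iff hne, mul_comm]
    exact (hlift t ht).symm
  set φ : ℝ → ℝ := fun t => θ t - θ a - Complex.arg (v t / v a) / (2 * π) with hφ
  have hφcont : ContinuousOn φ (Icc a c) := by
    apply ContinuousOn.sub (hθ.sub continuousOn_const)
    apply ContinuousOn.div_const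
    intro t ht
    have h1 : ContinuousWithinAt (fun u => v u / v a) (Icc a c) t :=
      (hv t ht).div continuousWithinAt_const hva
    have h2 : ContinuousWithinAt (Complex.arg ∘ fun u => v u / v a) (Icc a c) t :=
      ContinuousAt.comp_continuousWithinAt (f := fun u => v u / v a)
        (Complex.continuousAt_arg (hslit t ht)) h1
    exact h2
  have hφint : ∀ t ∈ Icc a c, ∃ k : ℤ, φ t = k := by
    intro t ht
    have hvt : v t ≠ 0 := hvne t ht
    have hr : v t / v a ≠ 0 := div_ne_zero hvt hva
    have hnt : (‖v t‖ : ℂ) ≠ 0 := by exact_mod_cast norm_ne_zero_iff.mpr hvt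
    have hna : (‖v a‖ : ℂ) ≠ 0 := by exact_mod_cast norm_ne_zero_iff.mpr hva
    have hnr : (‖v t / v a‖ : ℂ) ≠ 0 := by exact_mod_cast norm_ne_zero_iff.mpr hr
    have harg : Complex.exp ((Complex.arg (v t / v a) : ℂ) * Complex.I)
        = (v t / v a) / (‖v t / v a‖ : ℂ) := by
      rw [eq_div_iff hnr, mul_comm]
      exact Complex.norm_mul_exp_arg_mul_I (v t / v a)
    have hexp1 : Complex.exp (2 * π * Complex.I * (φ t : ℂ)) = 1 := by
      have hsplit : (2 * π * Complex.I * (φ t : ℂ)) =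
          2 * π * Complex.I * (θ t : ℂ) - 2 * π * Complex.I * (θ a : ℂ)
            - (Complex.arg (v t / v a) : ℂ) * Complex.I := by
        have hπC : (π : ℂ) ≠ 0 := by exact_mod_cast hπ
        rw [hφ]
        push_cast
        field_simp
      rw [hsplit, Complex.exp_sub, Complex.exp_sub, hunit t ht, hunit a hamem, harg]
      rw [norm_div]
      push_cast
      field_simp
    obtain ⟨k, hk⟩ := Complex.exp_eq_one_iff.mp hexp1
    refine ⟨k, ?_⟩
    have h2 : (2 * π * Complex.I : ℂ) ≠ 0 := by
      simp [Complex.I_ne_zero, hπ]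
    have : (φ t : ℂ) = (k : ℂ) := by
      apply mul_left_cancel₀ h2
      rw [hk]; ring
    exact_mod_cast this
  have hφa : φ a = 0 := by
    simp [hφ, div_self hva, Complex.arg_one]
  have hca := intConst φ a c hac hφcont hφint
  rw [hφa] at hca
  simp only [hφ] at hca
  linarith

lemma keyM (b : ℂ ≃ₜ ℂ) (hb_free : ∀ z, b z ≠ z) (hcomm : ∀ z, b (z + 1) = b z + 1)
    (γ γ' : ℝ → ℂ) (θ θ' : ℝ → ℝ)
    (hγ : ContinuousOn γ (Icc 0 1)) (hγ1 : γ 1 = γ 0 + 1)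
    (hθ : ContinuousOn θ (Icc 0 1))
    (hl : ∀ t ∈ Icc (0:ℝ) 1, b (γ t) - γ t = (‖b (γ t) - γ t‖ : ℂ) *
      Complex.exp (2 * π * Complex.I * (θ t : ℂ)))
    (hγ' : ContinuousOn γ' (Icc 0 1)) (hγ'1 : γ' 1 = γ' 0 + 1)
    (hθ' : ContinuousOn θ' (Icc 0 1))
    (hl' : ∀ t ∈ Icc (0:ℝ) 1, b (γ' t) - γ' t = (‖b (γ' t) - γ' t‖ : ℂ) *
      Complex.exp (2 * π * Complex.I * (θ' t : ℂ))) :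
    (θ 1 - θ 0 = θ' 1 - θ' 0) ∧ ∃ k : ℤ, θ 1 - θ 0 = k := by
  have hπ : (π : ℝ) ≠ 0 := Real.pi_ne_zero
  set w : ℂ → ℂ := fun z => b z - z with hw
  have hwc : Continuous w := b.continuous.sub continuous_id
  have hwne : ∀ z, w z ≠ 0 := fun z => sub_ne_zero.mpr (hb_free z)
  have hwper : ∀ z, w (z + 1) = w z := by
    intro z; simp only [hw, hcomm z]; ring
  set H : ℝ × ℝ → ℂ := fun p => (1 - (p.1 : ℂ)) * γ p.2 + (p.1 : ℂ) * γ' p.2 with hH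
  have hH0 : ∀ t, H (0, t) = γ t := by intro t; simp [hH]
  have hH1 : ∀ t, H (1, t) = γ' t := by intro t; simp [hH]
  set u : ℝ × ℝ → ℂ := fun p => w (H p) with hu
  set K : Set (ℝ × ℝ) := (Icc (0:ℝ) 1) ×ˢ (Icc (0:ℝ) 1) with hK
  have hγs : ContinuousOn (fun p : ℝ × ℝ => γ p.2) K :=
    hγ.comp continuous_snd.continuousOn (fun p hp => hp.2)
  have hγ's : ContinuousOn (fun p : ℝ × ℝ => γ' p.2) K :=
    hγ'.comp continuous_snd.continuousOn (fun p hp => hp.2)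
  have hfst : Continuous (fun p : ℝ × ℝ => ((p.1 : ℂ))) :=
    Complex.continuous_ofReal.comp continuous_fst
  have hHc : ContinuousOn H K :=
    (((continuous_const.sub hfst).continuousOn.mul hγs).add (hfst.continuousOn.mul hγ's))
  have huc : ContinuousOn u K := hwc.comp_continuousOn hHc
  have hune : ∀ p : ℝ × ℝ, u p ≠ 0 := fun p => hwne _
  have hunen : ∀ p : ℝ × ℝ, (‖u p‖ : ℂ) ≠ 0 := by
    intro p; exact_mod_cast norm_ne_zero_iff.mpr (hune p)
  set Un : ℝ × ℝ → ℂ := fun p => u p / (‖u p‖ : ℂ) with hUn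
  have hUnc : ContinuousOn Un K :=
    huc.div (Complex.continuous_ofReal.comp_continuousOn huc.norm) (fun p _ => hunen p)
  have hKc : IsCompact K := isCompact_Icc.prod isCompact_Icc
  obtain ⟨δ, hδpos, hδ⟩ := Metric.uniformContinuousOn_iff.mp
    (hKc.uniformContinuousOn_of_continuous hUnc) 1 one_pos
  obtain ⟨N, hN⟩ := exists_nat_one_div_lt hδpos
  set m : ℕ := N + 1 with hmdef
  have hm0 : (0:ℝ) < m := by positivity
  have h1m : (1:ℝ)/m < δ := by
    rw [hmdef]; push_cast; exact hN
  have tmem : ∀ k : ℕ, k ≤ m → (k:ℝ)/m ∈ Icc (0:ℝ) 1 := by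
    intro k hk
    constructor
    · positivity
    · rw [div_le_one hm0]; exact_mod_cast hk
  have hslit : ∀ s ∈ Icc (0:ℝ) 1, ∀ t ∈ Icc (0:ℝ) 1, ∀ t' ∈ Icc (0:ℝ) 1,
      |t - t'| ≤ 1/m → u (s, t) / u (s, t') ∈ Complex.slitPlane := by
    intro s hs t ht t' ht' hd
    apply slit_of _ _ (hune _) (hune _)
    have hdist : dist ((s, t) : ℝ × ℝ) (s, t') < δ := by
      rw [Prod.dist_eq]
      have h1 : dist s s = 0 := dist_self s
      have h2 : dist t t' = |t - t'| := Real.dist_eq t t'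
      rw [h1, h2]
      rw [max_eq_right (abs_nonneg _)]
      exact lt_of_le_of_lt hd h1m
    exact hδ (s, t) ⟨hs, ht⟩ (s, t') ⟨hs, ht'⟩ hdist
  set g : ℝ → ℝ := fun s => ∑ k ∈ Finset.range m,
    Complex.arg (u (s, ((k:ℝ)+1)/m) / u (s, (k:ℝ)/m)) with hg
  -- continuity of g
  have hslice : ∀ c ∈ Icc (0:ℝ) 1, ContinuousOn (fun s => u (s, c)) (Icc (0:ℝ) 1) := by
    intro c hc
    exact huc.comp ((continuous_id.prodMk continuous_const).continuousOn)
      (fun s hs => ⟨hs, hc⟩)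
  have hgc : ContinuousOn g (Icc (0:ℝ) 1) := by
    rw [hg]
    apply continuousOn_finset_sum
    intro k hk
    rw [Finset.mem_range] at hk
    have hk1 : ((k:ℝ)+1)/m ∈ Icc (0:ℝ) 1 := by
      refine ⟨by positivity, ?_⟩
      rw [div_le_one hm0]
      exact_mod_cast hk
    have hk0 : (k:ℝ)/m ∈ Icc (0:ℝ) 1 := tmem k hk.le
    have hr : ContinuousOn (fun s => u (s, ((k:ℝ)+1)/m) / u (s, (k:ℝ)/m)) (Icc (0:ℝ) 1) :=
      (hslice _ hk1).div (hslice _ hk0) (fun s _ => hune _)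
    intro s hs
    have hdd : |((k:ℝ)+1)/m - (k:ℝ)/m| ≤ 1/m := by
      have he : ((k:ℝ)+1)/m - (k:ℝ)/m = 1/m := by ring
      rw [he, _root_.abs_of_nonneg (by positivity : (0:ℝ) ≤ 1/(m:ℝ))]
    have hsl := hslit s hs _ hk1 _ hk0 hdd
    have h2 : ContinuousWithinAt
        (Complex.arg ∘ fun s => u (s, ((k:ℝ)+1)/m) / u (s, (k:ℝ)/m)) (Icc (0:ℝ) 1) s :=
      ContinuousAt.comp_continuousWithinAt
        (f := fun s => u (s, ((k:ℝ)+1)/m) / u (s, (k:ℝ)/m))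
        (Complex.continuousAt_arg hsl) (hr s hs)
    exact h2
  have hslice2 : ∀ s ∈ Icc (0:ℝ) 1, ContinuousOn (fun t => u (s, t)) (Icc (0:ℝ) 1) := by
    intro s hs
    exact huc.comp ((continuous_const.prodMk continuous_id).continuousOn)
      (fun t ht => ⟨hs, ht⟩)
  -- the main computation: for a slice with a lift, the increment equals g s / (2π)
  have main : ∀ s ∈ Icc (0:ℝ) 1, ∀ (η : ℝ → ℂ) (ϑ : ℝ → ℝ), (∀ t, H (s, t) = η t) →
      ContinuousOn ϑ (Icc 0 1) →
      (∀ t ∈ Icc (0:ℝ) 1, b (η t) - η t = (‖b (η t) - η t‖ : ℂ) *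
        Complex.exp (2 * π * Complex.I * (ϑ t : ℂ))) →
      ϑ 1 - ϑ 0 = g s / (2*π) := by
    intro s hs η ϑ hHs hϑc hϑl
    have hveq : ∀ t, u (s, t) = b (η t) - η t := by
      intro t; simp only [hu, hw, hHs t]
    have step : ∀ k, k < m → ϑ (((k:ℝ)+1)/m) - ϑ ((k:ℝ)/m) =
        Complex.arg (u (s, ((k:ℝ)+1)/m) / u (s, (k:ℝ)/m)) / (2*π) := by
      intro k hk
      have hk0 : (k:ℝ)/m ∈ Icc (0:ℝ) 1 := tmem k hk.le
      have hk1 : ((k:ℝ)+1)/m ∈ Icc (0:ℝ) 1 :=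
        ⟨by positivity, by rw [div_le_one hm0]; exact_mod_cast hk⟩
      have hsub : Icc ((k:ℝ)/m) (((k:ℝ)+1)/m) ⊆ Icc (0:ℝ) 1 := Icc_subset_Icc hk0.1 hk1.2
      have hac : (k:ℝ)/m ≤ ((k:ℝ)+1)/m :=
        (div_le_div_iff_of_pos_right hm0).mpr (by linarith)
      have he : ((k:ℝ)+1)/m - (k:ℝ)/m = 1/m := by ring
      have hls := liftIncrement (fun t => u (s, t)) ϑ ((k:ℝ)/m) (((k:ℝ)+1)/m) hac
        ((hslice2 s hs).mono hsub) (fun t _ => hune _)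
        (fun t ht => by
          refine hslit s hs t (hsub ht) _ hk0 ?_
          rw [_root_.abs_of_nonneg (by linarith [ht.1] : (0:ℝ) ≤ t - (k:ℝ)/m)]
          linarith [ht.2])
        (hϑc.mono hsub)
        (fun t ht => by simp only [hveq]; exact hϑl t (hsub ht))
      exact hls
    have tele : ∑ k ∈ Finset.range m, (ϑ (((k:ℝ)+1)/m) - ϑ ((k:ℝ)/m)) = ϑ 1 - ϑ 0 := by
      have t1 := Finset.sum_range_sub (fun k : ℕ => ϑ ((k:ℝ)/m)) m
      simp only [Nat.cast_add, Nat.cast_one, Nat.cast_zero, zero_div] at t1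
      rw [div_self (ne_of_gt hm0)] at t1
      exact t1
    rw [← tele, hg, Finset.sum_div]
    exact Finset.sum_congr rfl (fun k hk => step k (Finset.mem_range.mp hk))
  have hgint : ∀ s ∈ Icc (0:ℝ) 1, ∃ k : ℤ, g s / (2*π) = k := by
    intro s hs
    have hexp : Complex.exp ((g s : ℂ) * Complex.I) = 1 := by
      rw [hg]
      simp only [Complex.ofReal_sum]
      rw [Finset.sum_mul, Complex.exp_sum]
      have hterm : ∀ k ∈ Finset.range m,
          Complex.exp ((Complex.arg (u (s, ((k:ℝ)+1)/m) / u (s, (k:ℝ)/m)) : ℂ) * Complex.I)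
            = Un (s, ((k:ℝ)+1)/m) / Un (s, (k:ℝ)/m) := by
        intro k _
        set z1 := u (s, ((k:ℝ)+1)/m) with hz1
        set z0 := u (s, (k:ℝ)/m) with hz0
        have hr : z1 / z0 ≠ 0 := div_ne_zero (hune _) (hune _)
        have habs : (‖z1/z0‖ : ℂ) ≠ 0 := by
          exact_mod_cast (norm_ne_zero_iff.mpr hr)
        have hid := Complex.norm_mul_exp_arg_mul_I (z1/z0)
        have hexp2 : Complex.exp ((Complex.arg (z1/z0) : ℂ) * Complex.I)
            = (z1/z0) / (‖z1/z0‖ : ℂ) := by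
          rw [eq_div_iff habs, mul_comm]; exact hid
        have h1 : (‖z1‖ : ℂ) ≠ 0 := by
          exact_mod_cast (norm_ne_zero_iff.mpr (hune _))
        have h0 : (‖z0‖ : ℂ) ≠ 0 := by
          exact_mod_cast (norm_ne_zero_iff.mpr (hune _))
        have hz1ne : z1 ≠ 0 := hune _
        have hz0ne : z0 ≠ 0 := hune _
        rw [hexp2, hUn]
        simp only
        rw [← hz1, ← hz0]
        rw [norm_div, Complex.ofReal_div]
        field_simp
      rw [Finset.prod_congr rfl hterm]
      have hfe : ∀ k ∈ Finset.range m, Un (s, ((k:ℝ)+1)/m) / Un (s, (k:ℝ)/m) =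
          (fun k : ℕ => Un (s, (k:ℝ)/m)) (k+1) / (fun k : ℕ => Un (s, (k:ℝ)/m)) k := by
        intro k _
        simp only [Nat.cast_add, Nat.cast_one]
      rw [Finset.prod_congr rfl hfe,
        prodTel (fun k : ℕ => Un (s, (k:ℝ)/m)) m (fun k _ => div_ne_zero (hune _) (hunen _))]
      simp only [Nat.cast_zero, zero_div]
      rw [div_self (ne_of_gt hm0)]
      have huu : u (s, 1) = u (s, 0) := by
        have hHeq : H (s, 1) = H (s, 0) + 1 := by
          simp only [hH]; rw [hγ1, hγ'1]; ring
        simp only [hu]; rw [hHeq, hwper]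
      simp only [hUn, huu]
      exact div_self (div_ne_zero (hune _) (hunen _))
    obtain ⟨k, hk⟩ := Complex.exp_eq_one_iff.mp hexp
    have hC : (g s : ℂ) = k * (2*π) := by
      apply mul_right_cancel₀ Complex.I_ne_zero
      rw [hk]; ring
    have hgs : g s = k * (2*π) := by exact_mod_cast hC
    exact ⟨k, by rw [hgs]; field_simp⟩
  have hconst := intConst (fun s => g s / (2*π)) 0 1 zero_le_one (hgc.div_const _) hgint
  have A0 := main 0 ⟨le_refl 0, zero_le_one⟩ γ θ hH0 hθ hl
  have A1 := main 1 ⟨zero_le_one, le_refl 1⟩ γ' θ' hH1 hθ' hl'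
  constructor
  · rw [A0, A1]; exact hconst.symm
  · obtain ⟨k, hk⟩ := hgint 0 ⟨le_refl 0, zero_le_one⟩
    exact ⟨k, by rw [A0]; exact hk⟩

/-- Let `b` be a fixed-point-free homeomorphism of `ℂ` commuting with the
translation `τ(z) = z + 1`. Then there is a single integer `n` (the index
`I(b, τ)`) such that for every path `γ : [0,1] → ℂ` with `γ(1) = γ(0) + 1`,
the angular variation of `b` along `γ` — i.e. `θ(1) - θ(0)` for any continuous
lift `θ` with `b(γ(t)) - γ(t) = |b(γ(t)) - γ(t)|·e^{2πiθ(t)}` — equals `n`. -/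
theorem index_of_commuting_homeo_is_integer
    (b : ℂ ≃ₜ ℂ) (hb_free : ∀ z, b z ≠ z) (hcomm : ∀ z, b (z + 1) = b z + 1) :
    ∃ n : ℤ, ∀ γ : ℝ → ℂ, ContinuousOn γ (Set.Icc 0 1) → γ 1 = γ 0 + 1 →
      ∀ θ : ℝ → ℝ, ContinuousOn θ (Set.Icc 0 1) →
        (∀ t ∈ Set.Icc (0 : ℝ) 1,
          b (γ t) - γ t = (‖b (γ t) - γ t‖ : ℂ) *
            Complex.exp (2 * Real.pi * Complex.I * (θ t : ℂ))) →
        θ 1 - θ 0 = (n : ℝ) := by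
  by_cases h : ∃ γ : ℝ → ℂ, ContinuousOn γ (Set.Icc 0 1) ∧ γ 1 = γ 0 + 1 ∧
      ∃ θ : ℝ → ℝ, ContinuousOn θ (Set.Icc 0 1) ∧
        ∀ t ∈ Set.Icc (0 : ℝ) 1,
          b (γ t) - γ t = (‖b (γ t) - γ t‖ : ℂ) *
            Complex.exp (2 * Real.pi * Complex.I * (θ t : ℂ))
  · obtain ⟨γ₀, hγ₀c, hγ₀1, θ₀, hθ₀c, hθ₀l⟩ := h
    obtain ⟨-, k, hk⟩ := keyM b hb_free hcomm γ₀ γ₀ θ₀ θ₀ hγ₀c hγ₀1 hθ₀c hθ₀l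
      hγ₀c hγ₀1 hθ₀c hθ₀l
    refine ⟨k, fun γ hγc hγ1 θ hθc hθl => ?_⟩
    obtain ⟨heq, -⟩ := keyM b hb_free hcomm γ γ₀ θ θ₀ hγc hγ1 hθc hθl
      hγ₀c hγ₀1 hθ₀c hθ₀l
    rw [heq]
    exact hk
  · exact ⟨0, fun γ hγc hγ1 θ hθc hθl => absurd ⟨γ, hγc, hγ1, θ, hθc, hθl⟩ h⟩
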